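/- If an ensemble {(π_i, ρ_i)} with all π_i > 0 achieves the Holevo capacity C(Γ) with average input ρ_Av = ∑_i π_i ρ_i, then H(Γ(ρ_i), Γ(ρ_Av)) = C(Γ) for every i. -/

import Mathlib

open Matrix Kronecker BigOperators
open scoped ComplexOrder

noncomputable def matLog2 {n : Type*} [Fintype n] [DecidableEq n] (A : Matrix n n ℂ) :
    Matrix n n ℂ :=
  if hA : A.IsHermitian then
    (hA.eigenvectorUnitary : Matrix n n ℂ) *
      Matrix.diagonal (fun i => (Real.logb 2 (hA.eigenvalues i) : ℂ)) *
      (star (hA.eigenvectorUnitary : Matrix n n ℂ))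
  else 0

/-- von Neumann entropy (base 2): `S(A) = -Tr (A log₂ A)`. -/
noncomputable def vnEntropy {n : Type*} [Fintype n] [DecidableEq n] (A : Matrix n n ℂ) : ℝ :=
  -((A * matLog2 A).trace).re

/-- Quantum relative entropy `H(ω,σ) = Tr ω (log₂ ω - log₂ σ)`. -/
noncomputable def relEnt {n : Type*} [Fintype n] [DecidableEq n] (ω σ : Matrix n n ℂ) : ℝ :=
  ((ω * (matLog2 ω - matLog2 σ)).trace).re

def IsDensityMatrix {n : Type*} [Fintype n] [DecidableEq n] (A : Matrix n n ℂ) : Prop :=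
  A.PosSemidef ∧ A.trace = 1

/-- Holevo capacity: sup of `S(Γ(ρ̄)) - ∑ pᵢ S(Γ(ρᵢ))` over finite ensembles. -/
noncomputable def holevoCap {n : Type*} [Fintype n] [DecidableEq n]
    (Γ : Matrix n n ℂ → Matrix n n ℂ) : ℝ :=
  sSup {c : ℝ | ∃ (m : ℕ) (p : Fin m → ℝ) (ρ : Fin m → Matrix n n ℂ),
    (∀ i, 0 ≤ p i) ∧ (∑ i, p i = 1) ∧ (∀ i, IsDensityMatrix (ρ i)) ∧
    c = vnEntropy (Γ (∑ i, p i • ρ i)) - ∑ i, p i * vnEntropy (Γ (ρ i))}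

noncomputable def pauliX : Matrix (Fin 2) (Fin 2) ℂ := !![0, 1; 1, 0]
noncomputable def pauliY : Matrix (Fin 2) (Fin 2) ℂ := !![0, -Complex.I; Complex.I, 0]
noncomputable def pauliZ : Matrix (Fin 2) (Fin 2) ℂ := !![1, 0; 0, -1]

/-- The Bloch representation `ρ(x,y,z) = ½(I + xσₓ + yσ_y + zσ_z)`. -/
noncomputable def blochMat (x y z : ℝ) : Matrix (Fin 2) (Fin 2) ℂ :=
  (1/2 : ℂ) • ((1 : Matrix (Fin 2) (Fin 2) ℂ) + (x : ℂ) • pauliX + (y : ℂ) • pauliY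
    + (z : ℂ) • pauliZ)

/-- The (linear extension of the) qubit map acting on Bloch coordinates by
`(x,y,z) ↦ (λ₁x + t₁, λ₂y + t₂, λ₃z + t₃)`. -/
noncomputable def qubitChan (l₁ l₂ l₃ t₁ t₂ t₃ : ℝ) (M : Matrix (Fin 2) (Fin 2) ℂ) :
    Matrix (Fin 2) (Fin 2) ℂ :=
  (1/2 : ℂ) • (M.trace • (1 : Matrix (Fin 2) (Fin 2) ℂ)
    + ((l₁ : ℂ) * (M * pauliX).trace + (t₁ : ℂ) * M.trace) • pauliX
    + ((l₂ : ℂ) * (M * pauliY).trace + (t₂ : ℂ) * M.trace) • pauliY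
    + ((l₃ : ℂ) * (M * pauliZ).trace + (t₃ : ℂ) * M.trace) • pauliZ)

/-- The tensor product `Γ₁ ⊗ Γ₂` of two maps on matrices, acting on the Kronecker-product
space, determined by `(Γ₁ ⊗ Γ₂)(A ⊗ₖ B) = Γ₁(A) ⊗ₖ Γ₂(B)` for linear `Γ₁, Γ₂`. -/
noncomputable def tensorMap {m n : Type*} [Fintype m] [DecidableEq m] [Fintype n] [DecidableEq n]
    (Γ₁ : Matrix m m ℂ → Matrix m m ℂ) (Γ₂ : Matrix n n ℂ → Matrix n n ℂ)
    (M : Matrix (m × n) (m × n) ℂ) : Matrix (m × n) (m × n) ℂ :=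
  ∑ j : m, ∑ l : m,
    (Γ₁ (Matrix.single j l 1)) ⊗ₖ (Γ₂ (Matrix.of fun a b => M (j, a) (l, b)))

/-- Partial trace over the first tensor factor. -/
noncomputable def ptrace1 {m n : Type*} [Fintype m] (X : Matrix (m × n) (m × n) ℂ) :
    Matrix n n ℂ :=
  Matrix.of fun i k => ∑ a : m, X (a, i) (a, k)

/-- Partial trace over the second tensor factor. -/
noncomputable def ptrace2 {m n : Type*} [Fintype n] (X : Matrix (m × n) (m × n) ℂ) :
    Matrix m m ℂ :=
  Matrix.of fun i k => ∑ a : n, X (i, a) (k, a)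


section TraceLemmas

open Real Matrix

variable {n : Type*} [Fintype n] [DecidableEq n]

lemma matLog2_of_herm {A : Matrix n n ℂ} (hA : A.IsHermitian) :
    matLog2 A = (hA.eigenvectorUnitary : Matrix n n ℂ) *
      Matrix.diagonal (fun i => (Real.logb 2 (hA.eigenvalues i) : ℂ)) *
      (star (hA.eigenvectorUnitary : Matrix n n ℂ)) := dif_pos hA

lemma trace_mul_diag (M : Matrix n n ℂ) (f : n → ℂ) :
    (M * Matrix.diagonal f).trace = ∑ j, M j j * f j := by
  simp [Matrix.trace, Matrix.diag, Matrix.mul_diagonal]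

lemma trace_mul_UDU (B U : Matrix n n ℂ) (hU : U ∈ Matrix.unitaryGroup n ℂ) (f : n → ℂ) :
    (B * (U * Matrix.diagonal f * star U)).trace = ∑ j, (star U * B * U) j j * f j := by
  have : B * (U * Matrix.diagonal f * star U) = B * U * Matrix.diagonal f * star U := by
    simp only [Matrix.mul_assoc]
  rw [this, Matrix.trace_mul_comm (B * U * Matrix.diagonal f) (star U), ← Matrix.mul_assoc,
    ← Matrix.mul_assoc, trace_mul_diag]

end TraceLemmas

section SpectralLemmas

open Real Matrix

variable {n : Type*} [Fintype n] [DecidableEq n]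

/-- Overlap probabilities `P k j = |⟨v_k|u_j⟩|²` between eigenbases. -/
noncomputable def overlapP {ρ σ : Matrix n n ℂ} (hρ : ρ.IsHermitian) (hσ : σ.IsHermitian)
    (k j : n) : ℝ :=
  Complex.normSq ((star (hρ.eigenvectorUnitary : Matrix n n ℂ) *
    (hσ.eigenvectorUnitary : Matrix n n ℂ)) k j)

lemma overlapP_nonneg {ρ σ : Matrix n n ℂ} (hρ : ρ.IsHermitian) (hσ : σ.IsHermitian)
    (k j : n) : 0 ≤ overlapP hρ hσ k j := Complex.normSq_nonneg _

lemma conj_diag_entry (W : Matrix n n ℂ) (g : n → ℂ) (j : n) :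
    (star W * Matrix.diagonal g * W) j j = ∑ k, g k * (Complex.normSq (W k j) : ℂ) := by
  rw [Matrix.mul_assoc, Matrix.mul_apply]
  refine Finset.sum_congr rfl fun k _ => ?_
  simp only [Matrix.diagonal_mul, Matrix.star_apply, RCLike.star_def]
  rw [Complex.normSq_eq_conj_mul_self]
  ring

lemma overlapP_rowsum {ρ σ : Matrix n n ℂ} (hρ : ρ.IsHermitian) (hσ : σ.IsHermitian) (k : n) :
    ∑ j, overlapP hρ hσ k j = 1 := by
  set W := star (hρ.eigenvectorUnitary : Matrix n n ℂ) * (hσ.eigenvectorUnitary : Matrix n n ℂ)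
    with hW
  have hWu : W * star W = 1 := by
    rw [hW, StarMul.star_mul, star_star, Matrix.mul_assoc, ← Matrix.mul_assoc
      (hσ.eigenvectorUnitary : Matrix n n ℂ)]
    rw [(Matrix.mem_unitaryGroup_iff).mp hσ.eigenvectorUnitary.2, one_mul,
      (Matrix.mem_unitaryGroup_iff').mp hρ.eigenvectorUnitary.2]
  have h1 : (W * star W) k k = 1 := by rw [hWu]; simp
  rw [Matrix.mul_apply] at h1
  have : ∑ j, (Complex.normSq (W k j) : ℂ) = 1 := by
    rw [← h1]
    refine Finset.sum_congr rfl fun j _ => ?_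
    rw [Matrix.star_apply, RCLike.star_def, Complex.mul_conj]
  have := congrArg Complex.re this
  simp at this; exact this

lemma overlapP_colsum {ρ σ : Matrix n n ℂ} (hρ : ρ.IsHermitian) (hσ : σ.IsHermitian) (j : n) :
    ∑ k, overlapP hρ hσ k j = 1 := by
  set W := star (hρ.eigenvectorUnitary : Matrix n n ℂ) * (hσ.eigenvectorUnitary : Matrix n n ℂ)
    with hW
  have hWu : star W * W = 1 := by
    rw [hW, StarMul.star_mul, star_star, Matrix.mul_assoc, ← Matrix.mul_assoc
      (hρ.eigenvectorUnitary : Matrix n n ℂ)]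
    rw [(Matrix.mem_unitaryGroup_iff).mp hρ.eigenvectorUnitary.2, one_mul,
      (Matrix.mem_unitaryGroup_iff').mp hσ.eigenvectorUnitary.2]
  have h1 : (star W * W) j j = 1 := by rw [hWu]; simp
  rw [Matrix.mul_apply] at h1
  have : ∑ k, (Complex.normSq (W k j) : ℂ) = 1 := by
    rw [← h1]
    refine Finset.sum_congr rfl fun k _ => ?_
    rw [Matrix.star_apply, RCLike.star_def, ← Complex.normSq_eq_conj_mul_self]
  have := congrArg Complex.re this
  simp at this; exact this

/-- Master trace formula: `Tr(ρ · U_σ diag(f) U_σ*) = ∑ₖⱼ P k j · μ k · f j`. -/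
lemma trace_mul_diag_form {ρ σ : Matrix n n ℂ} (hρ : ρ.IsHermitian) (hσ : σ.IsHermitian)
    (f : n → ℝ) :
    (ρ * ((hσ.eigenvectorUnitary : Matrix n n ℂ) *
        Matrix.diagonal (fun j => (f j : ℂ)) *
        star (hσ.eigenvectorUnitary : Matrix n n ℂ))).trace
      = ((∑ k, ∑ j, overlapP hρ hσ k j * hρ.eigenvalues k * f j : ℝ) : ℂ) := by
  rw [trace_mul_UDU _ _ hσ.eigenvectorUnitary.2]
  have key : ∀ j, (star (hσ.eigenvectorUnitary : Matrix n n ℂ) * ρ *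
      (hσ.eigenvectorUnitary : Matrix n n ℂ)) j j
      = ∑ k, ((hρ.eigenvalues k : ℂ)) * (Complex.normSq
          ((star (hρ.eigenvectorUnitary : Matrix n n ℂ) *
            (hσ.eigenvectorUnitary : Matrix n n ℂ)) k j) : ℂ) := by
    intro j
    have hspec := hρ.spectral_theorem
    have : star (hσ.eigenvectorUnitary : Matrix n n ℂ) * ρ *
        (hσ.eigenvectorUnitary : Matrix n n ℂ)
        = star ((star (hρ.eigenvectorUnitary : Matrix n n ℂ) *
            (hσ.eigenvectorUnitary : Matrix n n ℂ))) *
          Matrix.diagonal (RCLike.ofReal ∘ hρ.eigenvalues) *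
          ((star (hρ.eigenvectorUnitary : Matrix n n ℂ) *
            (hσ.eigenvectorUnitary : Matrix n n ℂ))) := by
      rw [StarMul.star_mul, star_star]
      conv_lhs => rw [hspec]
      simp only [Unitary.conjStarAlgAut_apply, Matrix.mul_assoc]
    rw [this, conj_diag_entry]
    rfl
  rw [Finset.sum_comm]
  push_cast
  refine Finset.sum_congr rfl fun j _ => ?_
  rw [key j, Finset.sum_mul]
  refine Finset.sum_congr rfl fun k _ => ?_
  unfold overlapP
  push_cast
  ring

end SpectralLemmas

section TraceForms

open Real Matrix

variable {n : Type*} [Fintype n] [DecidableEq n]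

lemma trace_herm {A : Matrix n n ℂ} (hA : A.IsHermitian) :
    A.trace = ((∑ i, hA.eigenvalues i : ℝ) : ℂ) := by
  conv_lhs => rw [hA.spectral_theorem, Unitary.conjStarAlgAut_apply]
  rw [Matrix.trace_mul_comm, ← Matrix.mul_assoc,
    (Matrix.mem_unitaryGroup_iff').mp hA.eigenvectorUnitary.2, one_mul, Matrix.trace_diagonal]
  push_cast
  rfl

lemma re_trace_herm {A : Matrix n n ℂ} (hA : A.IsHermitian) :
    (A.trace).re = ∑ i, hA.eigenvalues i := by rw [trace_herm hA, Complex.ofReal_re]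

lemma trace_self_matLog2 {A : Matrix n n ℂ} (hA : A.IsHermitian) :
    (A * matLog2 A).trace
      = ((∑ j, hA.eigenvalues j * Real.logb 2 (hA.eigenvalues j) : ℝ) : ℂ) := by
  rw [matLog2_of_herm hA, trace_mul_UDU _ _ hA.eigenvectorUnitary.2,
    (show star (hA.eigenvectorUnitary : Matrix n n ℂ) * A * (hA.eigenvectorUnitary : Matrix n n ℂ) = Matrix.diagonal (RCLike.ofReal ∘ hA.eigenvalues) by have h := hA.conjStarAlgAut_star_eigenvectorUnitary; rw [Unitary.conjStarAlgAut_apply, Unitary.coe_star, star_star] at h; exact h)]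
  push_cast
  refine Finset.sum_congr rfl fun j _ => ?_
  simp [Matrix.diagonal_apply_eq, Function.comp]

lemma vnEntropy_eq_sum {A : Matrix n n ℂ} (hA : A.IsHermitian) :
    vnEntropy A = -∑ j, hA.eigenvalues j * Real.logb 2 (hA.eigenvalues j) := by
  unfold vnEntropy
  rw [trace_self_matLog2 hA, Complex.ofReal_re]

lemma trace_mul_matLog2 {ρ σ : Matrix n n ℂ} (hρ : ρ.IsHermitian) (hσ : σ.IsHermitian) :
    (ρ * matLog2 σ).trace
      = ((∑ k, ∑ j, overlapP hρ hσ k j * hρ.eigenvalues k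
          * Real.logb 2 (hσ.eigenvalues j) : ℝ) : ℂ) := by
  rw [matLog2_of_herm hσ]
  exact trace_mul_diag_form hρ hσ _

lemma trace_mul_herm {ρ σ : Matrix n n ℂ} (hρ : ρ.IsHermitian) (hσ : σ.IsHermitian) :
    (ρ * σ).trace
      = ((∑ k, ∑ j, overlapP hρ hσ k j * hρ.eigenvalues k * hσ.eigenvalues j : ℝ) : ℂ) := by
  have hσ' : σ = (hσ.eigenvectorUnitary : Matrix n n ℂ) *
      Matrix.diagonal (fun j => ((hσ.eigenvalues j : ℝ) : ℂ)) *
      star (hσ.eigenvectorUnitary : Matrix n n ℂ) := by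
    conv_lhs => rw [hσ.spectral_theorem]
    rfl
  conv_lhs => rw [hσ']
  exact trace_mul_diag_form hρ hσ _

lemma trace_sq_herm {A : Matrix n n ℂ} (hA : A.IsHermitian) :
    (A * A).trace = ((∑ j, hA.eigenvalues j ^ 2 : ℝ) : ℂ) := by
  have hA' : A = (hA.eigenvectorUnitary : Matrix n n ℂ) *
      Matrix.diagonal (fun j => ((hA.eigenvalues j : ℝ) : ℂ)) *
      star (hA.eigenvectorUnitary : Matrix n n ℂ) := by
    conv_lhs => rw [hA.spectral_theorem]
    rfl
  nth_rewrite 2 [hA']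
  rw [trace_mul_UDU _ _ hA.eigenvectorUnitary.2, (show star (hA.eigenvectorUnitary : Matrix n n ℂ) * A * (hA.eigenvectorUnitary : Matrix n n ℂ) = Matrix.diagonal (RCLike.ofReal ∘ hA.eigenvalues) by have h := hA.conjStarAlgAut_star_eigenvectorUnitary; rw [Unitary.conjStarAlgAut_apply, Unitary.coe_star, star_star] at h; exact h)]
  push_cast
  refine Finset.sum_congr rfl fun j _ => ?_
  simp [Matrix.diagonal_apply_eq, Function.comp]
  ring

lemma relEnt_eq_double {ρ σ : Matrix n n ℂ} (hρ : ρ.IsHermitian) (hσ : σ.IsHermitian) :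
    relEnt ρ σ = ∑ k, ∑ j, overlapP hρ hσ k j * hρ.eigenvalues k
      * (Real.logb 2 (hρ.eigenvalues k) - Real.logb 2 (hσ.eigenvalues j)) := by
  unfold relEnt
  rw [Matrix.mul_sub, Matrix.trace_sub, trace_self_matLog2 hρ, trace_mul_matLog2 hρ hσ]
  rw [← Complex.ofReal_sub, Complex.ofReal_re]
  have hrow : ∑ j, hρ.eigenvalues j * Real.logb 2 (hρ.eigenvalues j)
      = ∑ k, ∑ j, overlapP hρ hσ k j * hρ.eigenvalues k * Real.logb 2 (hρ.eigenvalues k) := by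
    refine Finset.sum_congr rfl fun k _ => ?_
    simp only [mul_assoc, ← Finset.sum_mul]
    rw [overlapP_rowsum, one_mul]
  rw [hrow, ← Finset.sum_sub_distrib]
  refine Finset.sum_congr rfl fun k _ => ?_
  rw [← Finset.sum_sub_distrib]
  refine Finset.sum_congr rfl fun j _ => ?_
  ring

end TraceForms

section Chi2

open Real Matrix

variable {n : Type*} [Fintype n] [DecidableEq n]

lemma scalar_log_bound {μ lam δ : ℝ} (hμ : 0 ≤ μ) (hδ : 0 < δ) (hl : δ ≤ lam) :
    μ * (Real.logb 2 μ - Real.logb 2 lam)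
      ≤ ((μ - lam) + (μ - lam) ^ 2 / δ) / Real.log 2 := by
  have hlam : 0 < lam := lt_of_lt_of_le hδ hl
  have hlog2 : 0 < Real.log 2 := Real.log_pos one_lt_two
  have key : μ * (Real.log μ - Real.log lam) ≤ (μ - lam) + (μ - lam) ^ 2 / δ := by
    rcases eq_or_lt_of_le hμ with h0 | hμpos
    · rw [← h0]
      have h2 : lam ≤ lam ^ 2 / δ := (le_div_iff₀ hδ).mpr (by nlinarith)
      have h3 : (0 - lam : ℝ) ^ 2 = lam ^ 2 := by ring
      rw [h3]
      linarith [zero_mul (Real.log 0 - Real.log lam)]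
    · have h1 : Real.log μ - Real.log lam ≤ (μ - lam) / lam := by
        have hd : (0 : ℝ) < μ / lam := by positivity
        have := Real.log_le_sub_one_of_pos hd
        rw [Real.log_div hμpos.ne' hlam.ne'] at this
        calc Real.log μ - Real.log lam ≤ μ / lam - 1 := this
          _ = (μ - lam) / lam := by field_simp
      have h2 : μ * ((μ - lam) / lam) = (μ - lam) + (μ - lam) ^ 2 / lam := by
        field_simp
        ring
      have h3 : (μ - lam) ^ 2 / lam ≤ (μ - lam) ^ 2 / δ :=
        div_le_div_of_nonneg_left (sq_nonneg _) hδ hl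
      have h4 : μ * (Real.log μ - Real.log lam) ≤ μ * ((μ - lam) / lam) :=
        mul_le_mul_of_nonneg_left h1 hμ
      linarith
  have hrw : μ * (Real.logb 2 μ - Real.logb 2 lam)
      = μ * (Real.log μ - Real.log lam) / Real.log 2 := by
    rw [Real.logb, Real.logb]
    ring
  rw [hrw]
  gcongr

lemma term_nonpos {x : ℝ} (h0 : 0 ≤ x) (h1 : x ≤ 1) : x * Real.logb 2 x ≤ 0 := by
  rcases eq_or_lt_of_le h0 with h | h
  · rw [← h, zero_mul]
  · exact mul_nonpos_of_nonneg_of_nonpos h.le (Real.logb_nonpos one_lt_two h0 h1)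

lemma term_ge_neg_two {x : ℝ} (h0 : 0 ≤ x) (h1 : x ≤ 1) : -2 ≤ x * Real.logb 2 x := by
  have hlog2 : (0.6931471803 : ℝ) < Real.log 2 := Real.log_two_gt_d9
  rcases eq_or_lt_of_le h0 with h | h
  · rw [← h, zero_mul]; norm_num
  · have hup : -(x * Real.log x) ≤ 1 - x := by
      have hd : (0 : ℝ) < 1 / x := by positivity
      have := Real.log_le_sub_one_of_pos hd
      rw [Real.log_div one_ne_zero h.ne', Real.log_one] at this
      have := mul_le_mul_of_nonneg_left this h0
      have hx : x * (1 / x - 1) = 1 - x := by field_simp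
      nlinarith
    have : x * Real.logb 2 x = (x * Real.log x) / Real.log 2 := by
      rw [Real.logb]; ring
    rw [this, le_div_iff₀ (by linarith : (0:ℝ) < Real.log 2)]
    nlinarith

lemma eigenvalues_le_one {A : Matrix n n ℂ} (h : IsDensityMatrix A) (j : n) :
    h.1.1.eigenvalues j ≤ 1 := by
  have hsum : ∑ i, h.1.1.eigenvalues i = 1 := by
    have h1 := re_trace_herm h.1.1
    have h2 : A.trace.re = 1 := by rw [h.2]; exact Complex.one_re
    exact h1.symm.trans h2
  calc h.1.1.eigenvalues j ≤ ∑ i, h.1.1.eigenvalues i :=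
        Finset.single_le_sum (fun i _ => h.1.eigenvalues_nonneg i) (Finset.mem_univ j)
    _ = 1 := hsum

lemma vnEntropy_nonneg {A : Matrix n n ℂ} (h : IsDensityMatrix A) : 0 ≤ vnEntropy A := by
  rw [vnEntropy_eq_sum h.1.1, neg_nonneg]
  exact Finset.sum_nonpos fun j _ =>
    term_nonpos (h.1.eigenvalues_nonneg j) (eigenvalues_le_one h j)

lemma vnEntropy_le_card {A : Matrix n n ℂ} (h : IsDensityMatrix A) :
    vnEntropy A ≤ 2 * Fintype.card n := by
  rw [vnEntropy_eq_sum h.1.1]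
  have : ∀ j ∈ Finset.univ, (-2 : ℝ) ≤ h.1.1.eigenvalues j * Real.logb 2 (h.1.1.eigenvalues j) :=
    fun j _ => term_ge_neg_two (h.1.eigenvalues_nonneg j) (eigenvalues_le_one h j)
  have hs := Finset.sum_le_sum this
  rw [Finset.sum_const, Finset.card_univ] at hs
  have : -(2 * (Fintype.card n : ℝ)) ≤ ∑ j, h.1.1.eigenvalues j * Real.logb 2 (h.1.1.eigenvalues j) := by
    simpa [nsmul_eq_mul, mul_comm] using hs
  linarith

/-- The χ²-type quadratic upper bound on relative entropy. -/
lemma relEnt_le_chi2 {ρ σ : Matrix n n ℂ} (hρ : ρ.PosSemidef) (hρt : ρ.trace = 1)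
    (hσ : σ.PosDef) (hσt : σ.trace = 1) {δ : ℝ} (hδ : 0 < δ)
    (hδle : ∀ j, δ ≤ hσ.1.eigenvalues j) :
    relEnt ρ σ ≤ (((ρ - σ) * (ρ - σ)).trace).re / (δ * Real.log 2) := by
  set hρh := hρ.1
  set hσh := hσ.1
  have hlog2 : 0 < Real.log 2 := Real.log_pos one_lt_two
  set P := overlapP hρh hσh with hP
  set μ := hρh.eigenvalues
  set lam := hσh.eigenvalues
  -- termwise bound
  have step1 : relEnt ρ σ ≤ ∑ k, ∑ j,
      P k j * (((μ k - lam j) + (μ k - lam j) ^ 2 / δ) / Real.log 2) := by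
    rw [relEnt_eq_double hρh hσh]
    refine Finset.sum_le_sum fun k _ => Finset.sum_le_sum fun j _ => ?_
    rw [mul_assoc]
    exact mul_le_mul_of_nonneg_left
      (scalar_log_bound (hρ.eigenvalues_nonneg k) hδ (hδle j)) (overlapP_nonneg _ _ _ _)
  -- sums of eigenvalues
  have hμsum : ∑ k, μ k = 1 := by
    have := re_trace_herm hρh; rw [hρt] at this; simpa using this.symm
  have hlamsum : ∑ j, lam j = 1 := by
    have := re_trace_herm hσh; rw [hσt] at this; simpa using this.symm
  -- linear part vanishes
  have hlin : ∑ k, ∑ j, P k j * (μ k - lam j) = 0 := by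
    have h1 : ∑ k, ∑ j, P k j * μ k = 1 := by
      have : ∀ k, ∑ j, P k j * μ k = μ k := by
        intro k; rw [← Finset.sum_mul, overlapP_rowsum, one_mul]
      rw [Finset.sum_congr rfl fun k _ => this k, hμsum]
    have h2 : ∑ k, ∑ j, P k j * lam j = 1 := by
      rw [Finset.sum_comm]
      have : ∀ j, ∑ k, P k j * lam j = lam j := by
        intro j; rw [← Finset.sum_mul, overlapP_colsum, one_mul]
      rw [Finset.sum_congr rfl fun j _ => this j, hlamsum]
    have : ∑ k, ∑ j, P k j * (μ k - lam j)
        = (∑ k, ∑ j, P k j * μ k) - ∑ k, ∑ j, P k j * lam j := by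
      rw [← Finset.sum_sub_distrib]
      refine Finset.sum_congr rfl fun k _ => ?_
      rw [← Finset.sum_sub_distrib]
      exact Finset.sum_congr rfl fun j _ => by ring
    rw [this, h1, h2, sub_self]
  -- quadratic part equals the trace of the square
  have hquad : ∑ k, ∑ j, P k j * (μ k - lam j) ^ 2 = (((ρ - σ) * (ρ - σ)).trace).re := by
    have hexp : (ρ - σ) * (ρ - σ) = ρ * ρ - ρ * σ - σ * ρ + σ * σ := by
      rw [Matrix.sub_mul, Matrix.mul_sub, Matrix.mul_sub]
      abel
    have htr : (((ρ - σ) * (ρ - σ)).trace).re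
        = ((ρ * ρ).trace).re - 2 * ((ρ * σ).trace).re + ((σ * σ).trace).re := by
      rw [hexp, Matrix.trace_add, Matrix.trace_sub, Matrix.trace_sub,
        Matrix.trace_mul_comm σ ρ]
      simp [Complex.add_re, Complex.sub_re]
      ring
    have h1 : ((ρ * ρ).trace).re = ∑ k, ∑ j, P k j * μ k ^ 2 := by
      rw [trace_sq_herm hρh, Complex.ofReal_re]
      refine Finset.sum_congr rfl fun k _ => ?_
      rw [← Finset.sum_mul, overlapP_rowsum, one_mul]
    have h2 : ((σ * σ).trace).re = ∑ k, ∑ j, P k j * lam j ^ 2 := by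
      rw [trace_sq_herm hσh, Complex.ofReal_re, Finset.sum_comm]
      refine Finset.sum_congr rfl fun j _ => ?_
      rw [← Finset.sum_mul, overlapP_colsum, one_mul]
    have h3 : ((ρ * σ).trace).re = ∑ k, ∑ j, P k j * (μ k * lam j) := by
      rw [trace_mul_herm hρh hσh, Complex.ofReal_re]
      refine Finset.sum_congr rfl fun k _ => Finset.sum_congr rfl fun j _ => by ring
    rw [htr, h1, h2, h3]
    have hk : ∀ k, ∑ j, P k j * (μ k - lam j) ^ 2
        = ∑ j, P k j * μ k ^ 2 - 2 * ∑ j, P k j * (μ k * lam j) + ∑ j, P k j * lam j ^ 2 := by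
      intro k
      rw [Finset.mul_sum, ← Finset.sum_sub_distrib, ← Finset.sum_add_distrib]
      exact Finset.sum_congr rfl fun j _ => by ring
    rw [Finset.sum_congr rfl fun k _ => hk k]
    rw [Finset.sum_add_distrib, Finset.sum_sub_distrib, ← Finset.mul_sum]
  -- combine
  have hsplit : ∑ k, ∑ j, P k j * (((μ k - lam j) + (μ k - lam j) ^ 2 / δ) / Real.log 2)
      = (∑ k, ∑ j, P k j * (μ k - lam j)) / Real.log 2
        + (∑ k, ∑ j, P k j * (μ k - lam j) ^ 2) / (δ * Real.log 2) := by
    rw [Finset.sum_div, Finset.sum_div, ← Finset.sum_add_distrib]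
    refine Finset.sum_congr rfl fun k _ => ?_
    rw [Finset.sum_div, Finset.sum_div, ← Finset.sum_add_distrib]
    refine Finset.sum_congr rfl fun j _ => ?_
    field_simp
  rw [hsplit, hlin, hquad] at step1
  simpa using step1

end Chi2

section Ensembles

open Real Matrix

variable {n : Type*} [Fintype n] [DecidableEq n]

lemma posSemidef_smul_real {A : Matrix n n ℂ} (hA : A.PosSemidef) {c : ℝ} (hc : 0 ≤ c) :
    (c • A).PosSemidef := by
  constructor
  · unfold Matrix.IsHermitian
    rw [Matrix.conjTranspose_smul, hA.1]
    norm_num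
  · intro x
    exact (hA.smul hc).2 x

lemma isDM_convex {k : ℕ} (p : Fin k → ℝ) (ρ : Fin k → Matrix n n ℂ)
    (hp : ∀ i, 0 ≤ p i) (hs : ∑ i, p i = 1) (hd : ∀ i, IsDensityMatrix (ρ i)) :
    IsDensityMatrix (∑ i, p i • ρ i) := by
  constructor
  · exact Finset.sum_induction _ _ (fun a b ha hb => ha.add hb) Matrix.PosSemidef.zero
      (fun i _ => posSemidef_smul_real (hd i).1 (hp i))
  · rw [Matrix.trace_sum]
    have : ∀ i, (p i • ρ i).trace = ((p i : ℝ) : ℂ) := by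
      intro i
      rw [Matrix.trace_smul, (hd i).2, Complex.real_smul, mul_one]
    rw [Finset.sum_congr rfl fun i _ => this i]
    push_cast
    exact_mod_cast congrArg (fun x : ℝ => (x : ℂ)) hs

lemma gamma_affine_sum (Γ : Matrix n n ℂ → Matrix n n ℂ)
    (haff : ∀ ρ σ, IsDensityMatrix ρ → IsDensityMatrix σ → ∀ t : ℝ, 0 ≤ t → t ≤ 1 →
      Γ (t • ρ + (1 - t) • σ) = t • Γ ρ + (1 - t) • Γ σ) :
    ∀ (k : ℕ) (p : Fin k → ℝ) (ρ : Fin k → Matrix n n ℂ),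
      (∀ i, 0 ≤ p i) → (∑ i, p i = 1) → (∀ i, IsDensityMatrix (ρ i)) →
      Γ (∑ i, p i • ρ i) = ∑ i, p i • Γ (ρ i) := by
  intro k
  induction k with
  | zero =>
    intro p ρ hp hs hd
    simp at hs
  | succ k ih =>
    intro p ρ hp hs hd
    rw [Fin.sum_univ_succ] at hs
    rw [Fin.sum_univ_succ, Fin.sum_univ_succ]
    have hrestnn : 0 ≤ ∑ i : Fin k, p i.succ := Finset.sum_nonneg fun i _ => hp _
    have hp0le : p 0 ≤ 1 := by linarith
    have hrest : ∑ i : Fin k, p i.succ = 1 - p 0 := by linarith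
    rcases eq_or_lt_of_le hp0le with h1 | h1
    · -- p 0 = 1, the rest vanishes
      have h0 : ∑ i : Fin k, p i.succ = 0 := by rw [hrest, h1]; ring
      have hz : ∀ i : Fin k, p i.succ = 0 := fun i =>
        (Finset.sum_eq_zero_iff_of_nonneg (fun i _ => hp _)).mp h0 i (Finset.mem_univ i)
      have hz1 : ∑ i : Fin k, p i.succ • ρ i.succ = 0 :=
        Finset.sum_eq_zero fun i _ => by rw [hz i, zero_smul]
      have hz2 : ∑ i : Fin k, p i.succ • Γ (ρ i.succ) = 0 :=
        Finset.sum_eq_zero fun i _ => by rw [hz i, zero_smul]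
      rw [hz1, hz2, add_zero, add_zero, h1, one_smul, one_smul]
    · -- p 0 < 1
      have hspos : 0 < 1 - p 0 := by linarith
      set q : Fin k → ℝ := fun i => p i.succ / (1 - p 0) with hq
      have hqnn : ∀ i, 0 ≤ q i := fun i => div_nonneg (hp _) hspos.le
      have hqsum : ∑ i, q i = 1 := by
        rw [hq, ← Finset.sum_div, hrest, div_self hspos.ne']
      have hpq : ∀ i : Fin k, p i.succ = (1 - p 0) * q i := by
        intro i
        rw [hq]
        field_simp
      have hτDM : IsDensityMatrix (∑ i : Fin k, q i • ρ i.succ) :=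
        isDM_convex q _ hqnn hqsum (fun i => hd i.succ)
      have hsum_eq : ∑ i : Fin k, p i.succ • ρ i.succ
          = (1 - p 0) • ∑ i : Fin k, q i • ρ i.succ := by
        rw [Finset.smul_sum]
        refine Finset.sum_congr rfl fun i _ => ?_
        rw [smul_smul, ← hpq]
      have hsum_eq2 : ∑ i : Fin k, p i.succ • Γ (ρ i.succ)
          = (1 - p 0) • ∑ i : Fin k, q i • Γ (ρ i.succ) := by
        rw [Finset.smul_sum]
        refine Finset.sum_congr rfl fun i _ => ?_
        rw [smul_smul, ← hpq]
      rw [hsum_eq, hsum_eq2,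
        haff (ρ 0) _ (hd 0) hτDM (p 0) (hp 0) hp0le,
        ih q _ hqnn hqsum (fun i => hd i.succ)]

lemma holevoSet_bddAbove (Γ : Matrix n n ℂ → Matrix n n ℂ)
    (hmap : ∀ ρ, IsDensityMatrix ρ → IsDensityMatrix (Γ ρ)) :
    BddAbove {c : ℝ | ∃ (m : ℕ) (p : Fin m → ℝ) (ρ : Fin m → Matrix n n ℂ),
      (∀ i, 0 ≤ p i) ∧ (∑ i, p i = 1) ∧ (∀ i, IsDensityMatrix (ρ i)) ∧
      c = vnEntropy (Γ (∑ i, p i • ρ i)) - ∑ i, p i * vnEntropy (Γ (ρ i))} := by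
  refine ⟨2 * Fintype.card n, fun c hc => ?_⟩
  obtain ⟨m, p, ρ, hp, hs, hd, rfl⟩ := hc
  have havg := hmap _ (isDM_convex p ρ hp hs hd)
  have h1 : vnEntropy (Γ (∑ i, p i • ρ i)) ≤ 2 * Fintype.card n := vnEntropy_le_card havg
  have h2 : 0 ≤ ∑ i, p i * vnEntropy (Γ (ρ i)) :=
    Finset.sum_nonneg fun i _ => mul_nonneg (hp i) (vnEntropy_nonneg (hmap _ (hd i)))
  linarith

lemma re_trace_smul_mul (a : ℝ) (A C : Matrix n n ℂ) :
    (((a • A) * C).trace).re = a * ((A * C).trace).re := by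
  rw [Matrix.smul_mul, Matrix.trace_smul]
  simp [Complex.real_smul]

lemma re_trace_add_mul (A B C : Matrix n n ℂ) :
    (((A + B) * C).trace).re = ((A * C).trace).re + ((B * C).trace).re := by
  rw [Matrix.add_mul, Matrix.trace_add, Complex.add_re]

lemma re_trace_sum_smul_mul {k : ℕ} (c : Fin k → ℝ) (A : Fin k → Matrix n n ℂ)
    (B : Matrix n n ℂ) :
    (((∑ i, c i • A i) * B).trace).re = ∑ i, c i * ((A i * B).trace).re := by
  rw [Finset.sum_mul, Matrix.trace_sum]
  rw [Complex.re_sum]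
  refine Finset.sum_congr rfl fun i _ => ?_
  rw [Matrix.smul_mul, Matrix.trace_smul]
  simp [Complex.real_smul]

end Ensembles

section MainAux

open Real Matrix

variable {n : Type*} [Fintype n] [DecidableEq n]

lemma relEnt_expand (ω σ : Matrix n n ℂ) :
    relEnt ω σ = -vnEntropy ω - ((ω * matLog2 σ).trace).re := by
  unfold relEnt vnEntropy
  rw [Matrix.mul_sub, Matrix.trace_sub, Complex.sub_re]
  ring

end MainAux

theorem relEnt_to_optimal_average_eq_cap {d m : ℕ}
    (Γ : Matrix (Fin d) (Fin d) ℂ → Matrix (Fin d) (Fin d) ℂ)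
    (hmap : ∀ ρ, IsDensityMatrix ρ → IsDensityMatrix (Γ ρ))
    (haff : ∀ ρ σ, IsDensityMatrix ρ → IsDensityMatrix σ → ∀ t : ℝ, 0 ≤ t → t ≤ 1 →
      Γ (t • ρ + (1 - t) • σ) = t • Γ ρ + (1 - t) • Γ σ)
    (π : Fin m → ℝ) (ρs : Fin m → Matrix (Fin d) (Fin d) ℂ)
    (hπ : ∀ i, 0 < π i) (hπs : ∑ i, π i = 1) (hρs : ∀ i, IsDensityMatrix (ρs i))
    (hpd : (Γ (∑ i, π i • ρs i)).PosDef)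
    (hopt : vnEntropy (Γ (∑ i, π i • ρs i)) - ∑ i, π i * vnEntropy (Γ (ρs i)) = holevoCap Γ) :
    ∀ i, relEnt (Γ (ρs i)) (Γ (∑ i, π i • ρs i)) = holevoCap Γ := by
  classical
  intro i0
  have hπnn : ∀ i, 0 ≤ π i := fun i => (hπ i).le
  set ρAv := ∑ i, π i • ρs i with hρAv
  have hAvDM : IsDensityMatrix ρAv := isDM_convex π ρs hπnn hπs hρs
  set σ := Γ ρAv with hσdef
  have hσDM : IsDensityMatrix σ := hmap _ hAvDM
  have hσsum : σ = ∑ i, π i • Γ (ρs i) := by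
    rw [hσdef, hρAv, gamma_affine_sum Γ haff m π ρs hπnn hπs hρs]
  set C := holevoCap Γ with hC
  have hBdd := holevoSet_bddAbove Γ hmap
  -- nonemptiness of the index type
  have hne : Nonempty (Fin d) := by
    rcases Nat.eq_zero_or_pos d with hd0 | hd0
    · exfalso
      have h2 := hσDM.2
      have : σ.trace = 0 := by
        unfold Matrix.trace
        subst hd0
        simp
      rw [this] at h2
      exact one_ne_zero h2.symm
    · exact ⟨⟨0, hd0⟩⟩
  haveI := hne
  -- minimum eigenvalue of σ
  set δ := Finset.univ.inf' Finset.univ_nonempty hpd.1.eigenvalues with hδ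
  have hδpos : 0 < δ := by
    rw [hδ, Finset.lt_inf'_iff]
    exact fun j _ => hpd.eigenvalues_pos j
  have hδle : ∀ j, δ ≤ hpd.1.eigenvalues j := fun j => Finset.inf'_le _ (Finset.mem_univ j)
  -- Step B : every relative entropy to the average is at most the capacity
  have stepB : ∀ i, relEnt (Γ (ρs i)) σ ≤ C := by
    intro i
    set ω := Γ (ρs i) with hω
    have hωDM : IsDensityMatrix ω := hmap _ (hρs i)
    set K : ℝ := (((ω - σ) * (ω - σ)).trace).re / (δ * Real.log 2) with hK
    have key : ∀ t : ℝ, 0 < t → t < 1 → relEnt ω σ ≤ C + t * K := by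
      intro t ht0 ht1
      set p' : Fin (m + 1) → ℝ := Fin.cons t (fun j => (1 - t) * π j) with hp'
      set ρ' : Fin (m + 1) → Matrix (Fin d) (Fin d) ℂ := Fin.cons (ρs i) ρs with hρ'
      have hp'nn : ∀ j, 0 ≤ p' j := by
        intro j
        refine Fin.cases ?_ ?_ j
        · simpa [hp'] using ht0.le
        · intro j
          simp only [hp', Fin.cons_succ]
          exact mul_nonneg (by linarith) (hπnn j)
      have hp'sum : ∑ j, p' j = 1 := by
        rw [hp', Fin.sum_cons, ← Finset.mul_sum, hπs]
        ring
      have hρ'DM : ∀ j, IsDensityMatrix (ρ' j) := by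
        intro j
        refine Fin.cases ?_ ?_ j
        · simpa [hρ'] using hρs i
        · intro j; simpa [hρ'] using hρs j
      have havg : ∑ j, p' j • ρ' j = t • ρs i + (1 - t) • ρAv := by
        rw [hp', hρ', Fin.sum_univ_succ]
        simp only [Fin.cons_zero, Fin.cons_succ]
        congr 1
        rw [hρAv, Finset.smul_sum]
        exact Finset.sum_congr rfl fun j _ => (smul_smul _ _ _).symm
      have hΓavg : Γ (∑ j, p' j • ρ' j) = t • ω + (1 - t) • σ := by
        rw [havg, haff (ρs i) ρAv (hρs i) hAvDM t ht0.le ht1.le]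
      set σt := t • ω + (1 - t) • σ with hσt
      have hσtDM : IsDensityMatrix σt := by
        have := hmap _ (isDM_convex p' ρ' hp'nn hp'sum hρ'DM)
        rwa [hΓavg] at this
      have hmem : vnEntropy (Γ (∑ j, p' j • ρ' j)) - ∑ j, p' j * vnEntropy (Γ (ρ' j))
          ∈ {c : ℝ | ∃ (m : ℕ) (p : Fin m → ℝ) (ρ : Fin m → Matrix (Fin d) (Fin d) ℂ),
            (∀ i, 0 ≤ p i) ∧ (∑ i, p i = 1) ∧ (∀ i, IsDensityMatrix (ρ i)) ∧
            c = vnEntropy (Γ (∑ i, p i • ρ i)) - ∑ i, p i * vnEntropy (Γ (ρ i))} :=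
        ⟨m + 1, p', ρ', hp'nn, hp'sum, hρ'DM, rfl⟩
      have hle : vnEntropy (Γ (∑ j, p' j • ρ' j)) - ∑ j, p' j * vnEntropy (Γ (ρ' j)) ≤ C :=
        le_csSup hBdd hmem
      have hSsum : ∑ j, p' j * vnEntropy (Γ (ρ' j))
          = t * vnEntropy ω + (1 - t) * ∑ j, π j * vnEntropy (Γ (ρs j)) := by
        rw [hp', hρ', Fin.sum_univ_succ]
        simp only [Fin.cons_zero, Fin.cons_succ]
        rw [Finset.mul_sum, hω]
        congr 1
        exact Finset.sum_congr rfl fun j _ => by ring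
      have hSig : ∑ j, π j * vnEntropy (Γ (ρs j)) = vnEntropy σ - C := by
        have := hopt
        linarith
      have hABC : vnEntropy σt - t * vnEntropy ω - (1 - t) * vnEntropy σ ≤ t * C := by
        rw [hΓavg] at hle
        rw [hSsum, hSig] at hle
        nlinarith [hle]
      -- exact identity relating S(σt), S(σ) and the cross term
      have e1 : relEnt σt σ = ((σt * matLog2 σt).trace).re - ((σt * matLog2 σ).trace).re := by
        unfold relEnt
        rw [Matrix.mul_sub, Matrix.trace_sub, Complex.sub_re]
      have e2 : ((σt * matLog2 σ).trace).re
          = t * ((ω * matLog2 σ).trace).re + (1 - t) * ((σ * matLog2 σ).trace).re := by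
        rw [hσt, re_trace_add_mul, re_trace_smul_mul, re_trace_smul_mul]
      have e3 : vnEntropy σt = -((σt * matLog2 σt).trace).re := rfl
      have e4 : vnEntropy σ = -((σ * matLog2 σ).trace).re := rfl
      have hrel : relEnt ω σ = -vnEntropy ω - ((ω * matLog2 σ).trace).re := relEnt_expand ω σ
      -- chi-squared bound
      have hchi : relEnt σt σ ≤ (((σt - σ) * (σt - σ)).trace).re / (δ * Real.log 2) :=
        relEnt_le_chi2 hσtDM.1 hσtDM.2 hpd hσDM.2 hδpos hδle
      have hσtσ : σt - σ = t • (ω - σ) := by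
        rw [hσt, smul_sub, sub_smul, one_smul]
        abel
      have hq : (((σt - σ) * (σt - σ)).trace).re
          = t ^ 2 * (((ω - σ) * (ω - σ)).trace).re := by
        rw [hσtσ, Matrix.smul_mul, Matrix.mul_smul, smul_smul, Matrix.trace_smul]
        rw [Complex.real_smul, Complex.mul_re]
        simp only [Complex.ofReal_re, Complex.ofReal_im, zero_mul, sub_zero]
        ring
      have hchi2 : relEnt σt σ ≤ t ^ 2 * K := by
        rw [hK, ← mul_div_assoc]
        rw [hq] at hchi
        exact hchi
      -- combine everything
      have hmain : t * relEnt ω σ ≤ t * (C + t * K) := by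
        rw [hrel]
        nlinarith [hABC, hchi2, e1, e2, e3, e4]
      exact le_of_mul_le_mul_left (by linarith [hmain]) ht0
    -- let t → 0
    refine le_of_forall_pos_le_add fun ε hε => ?_
    set t := min (1 / 2) (ε / (|K| + 1)) with ht
    have habs : 0 < |K| + 1 := by positivity
    have ht0 : 0 < t := lt_min (by norm_num) (div_pos hε habs)
    have ht1 : t < 1 := lt_of_le_of_lt (min_le_left _ _) (by norm_num)
    have h := key t ht0 ht1
    have htK : t * K ≤ ε := by
      have h1 : t * K ≤ t * |K| := mul_le_mul_of_nonneg_left (le_abs_self K) ht0.le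
      have h2 : t ≤ ε / (|K| + 1) := min_le_right _ _
      have h3 : t * |K| ≤ (ε / (|K| + 1)) * (|K| + 1) := by
        apply mul_le_mul h2 (by linarith) (abs_nonneg K) (by positivity)
      rw [div_mul_cancel₀ _ habs.ne'] at h3
      linarith
    linarith
  -- Step A : the average of the relative entropies equals the capacity
  have stepA : ∑ j, π j * relEnt (Γ (ρs j)) σ = C := by
    have h2 : ((σ * matLog2 σ).trace).re = ∑ j, π j * ((Γ (ρs j) * matLog2 σ).trace).re := by
      set L := matLog2 σ with hL
      rw [hσsum, re_trace_sum_smul_mul]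
    have h3 : ∑ j, π j * relEnt (Γ (ρs j)) σ
        = -(∑ j, π j * vnEntropy (Γ (ρs j))) - ∑ j, π j * ((Γ (ρs j) * matLog2 σ).trace).re := by
      rw [← Finset.sum_neg_distrib, ← Finset.sum_sub_distrib]
      refine Finset.sum_congr rfl fun j _ => ?_
      rw [relEnt_expand]
      ring
    rw [h3, ← h2]
    have e4 : vnEntropy σ = -((σ * matLog2 σ).trace).re := rfl
    have := hopt
    linarith
  -- Step C : conclude equality for each i
  have hzero : ∑ j, π j * (C - relEnt (Γ (ρs j)) σ) = 0 := by
    have hsplit : ∑ j, π j * (C - relEnt (Γ (ρs j)) σ)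
        = (∑ j, π j * C) - ∑ j, π j * relEnt (Γ (ρs j)) σ := by
      rw [← Finset.sum_sub_distrib]
      exact Finset.sum_congr rfl fun j _ => by ring
    rw [hsplit, stepA, ← Finset.sum_mul, hπs, one_mul, sub_self]
  have hnn : ∀ j ∈ Finset.univ, 0 ≤ π j * (C - relEnt (Γ (ρs j)) σ) :=
    fun j _ => mul_nonneg (hπnn j) (by linarith [stepB j])
  have hall := (Finset.sum_eq_zero_iff_of_nonneg hnn).mp hzero i0 (Finset.mem_univ i0)
  have : C - relEnt (Γ (ρs i0)) σ = 0 := by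
    rcases mul_eq_zero.mp hall with h | h
    · exact absurd h (hπ i0).ne'
    · exact h
  linarith
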